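/- Let 𝔛 be a symmetric P-polynomial association scheme of class d with respect to the ordering A₀, A₁, …, A_d, with pairwise distinct eigenvalues θ₀, …, θ_d of A₁ and second eigenmatrix Q. Then for each i ∈ {1,…,d}, ∏_{j=1, j≠i}^d (θ₀ − θ_j)/(θ_i − θ_j) = − Q_i(d). -/

import Mathlib

open Matrix BigOperators

/-- A symmetric association scheme of class `d` on a finite set `X`, bundled with
its adjacency matrices `A i`, primitive idempotents `E i`, and first and second
eigenmatrices `P`, `Q` (with `P i j = P_i(j)`, `Q i j = Q_i(j)`). -/
structure AssocScheme (X : Type*) [Fintype X] [DecidableEq X] (d : ℕ) where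
  A : Fin (d + 1) → Matrix X X ℝ
  E : Fin (d + 1) → Matrix X X ℝ
  P : Fin (d + 1) → Fin (d + 1) → ℝ
  Q : Fin (d + 1) → Fin (d + 1) → ℝ
  A_entries : ∀ i x y, A i x y = 0 ∨ A i x y = 1
  A_zero : A 0 = 1
  A_ne : ∀ i, A i ≠ 0
  A_sum : ∑ i, A i = Matrix.of fun _ _ => (1 : ℝ)
  A_symm : ∀ i, (A i)ᵀ = A i
  A_mul : ∀ i j, ∃ p : Fin (d + 1) → ℝ, A i * A j = ∑ k, p k • A k
  E_zero : E 0 = ((Fintype.card X : ℝ))⁻¹ • Matrix.of fun _ _ => (1 : ℝ)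
  E_sum : ∑ i, E i = 1
  E_mul : ∀ i j, E i * E j = if i = j then E i else 0
  E_symm : ∀ i, (E i)ᵀ = E i
  A_eq : ∀ i, A i = ∑ j, P i j • E j
  E_eq : ∀ i, E i = ((Fintype.card X : ℝ))⁻¹ • ∑ j, Q i j • A j

namespace AssocScheme

variable {V : Type*} [Fintype V] [DecidableEq V] {d : ℕ} (S : AssocScheme V d)

/-- The eigenvalues `θ_j = P_1(j)` of the first adjacency matrix. -/
def theta (j : Fin (d + 1)) : ℝ := S.P 1 j

/-- `A j` appears in `M` if `M ∘ A j = α • A j` for some nonzero `α`. -/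
def Appears (M : Matrix V V ℝ) (j : Fin (d + 1)) : Prop :=
  ∃ α : ℝ, α ≠ 0 ∧ Matrix.hadamard M (S.A j) = α • S.A j

/-- `N*_h`: indices `j` such that `A j` appears in `A₁^h` but in no lower power. -/
def Nstar (h : ℕ) : Set (Fin (d + 1)) :=
  {j | S.Appears (S.A 1 ^ h) j ∧ ∀ l < h, ¬ S.Appears (S.A 1 ^ l) j}

/-- `S` is a P-polynomial scheme with respect to `A 1`: there is an ordering
`A 0, A 1, A (ξ 2), …, A (ξ d)` and polynomials `v i` of degree `i` with
`v i (A 1) = A (ξ i)`. -/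
def IsPPolyWrtA1 : Prop :=
  ∃ ξ : Equiv.Perm (Fin (d + 1)), ξ 0 = 0 ∧ ξ 1 = 1 ∧
    ∃ v : Fin (d + 1) → Polynomial ℝ,
      ∀ i, (v i).natDegree = (i : ℕ) ∧ Polynomial.aeval (S.A 1) (v i) = S.A (ξ i)

end AssocScheme
open Polynomial Finset

lemma spec_pow {n : ℕ} {V : Type*} [Fintype V] [DecidableEq V]
    (E : Fin n → Matrix V V ℝ) (hsum : ∑ i, E i = 1)
    (hmul : ∀ i j, E i * E j = if i = j then E i else 0)
    (θ : Fin n → ℝ) (m : ℕ) :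
    (∑ j, θ j • E j) ^ m = ∑ j, (θ j) ^ m • E j := by
  induction m with
  | zero => rw [pow_zero, ← hsum]; simp
  | succ m ih =>
    rw [pow_succ, ih, Finset.sum_mul_sum]
    refine Finset.sum_congr rfl fun j _ => ?_
    rw [Finset.sum_eq_single j (fun l _ hl => ?_) (by simp)]
    · rw [smul_mul_smul_comm, hmul, if_pos rfl, pow_succ]
    · simp [smul_mul_smul_comm, hmul j l, Ne.symm hl]

lemma spec_aeval {n : ℕ} {V : Type*} [Fintype V] [DecidableEq V]
    (E : Fin n → Matrix V V ℝ) (hsum : ∑ i, E i = 1)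
    (hmul : ∀ i j, E i * E j = if i = j then E i else 0)
    (θ : Fin n → ℝ) (p : Polynomial ℝ) :
    Polynomial.aeval (∑ j, θ j • E j) p = ∑ j, (p.eval (θ j)) • E j := by
  rw [Polynomial.aeval_eq_sum_range]
  simp_rw [spec_pow E hsum hmul θ, Finset.smul_sum, smul_smul]
  rw [Finset.sum_comm]
  refine Finset.sum_congr rfl fun j _ => ?_
  rw [Polynomial.eval_eq_sum_range, Finset.sum_smul]

lemma span_poly (w : ℕ → Polynomial ℝ) (hdeg : ∀ i, (w i).natDegree = i)
    (hne : ∀ i, w i ≠ 0) :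
    ∀ m (q : Polynomial ℝ), q.natDegree ≤ m → ∃ c : ℕ → ℝ,
      q = ∑ k ∈ Finset.range (m + 1), Polynomial.C (c k) * w k := by
  intro m
  induction m with
  | zero =>
    intro q hq
    set b := (w 0).coeff 0 with hb
    have hv0 : w 0 = C b := Polynomial.eq_C_of_natDegree_eq_zero (hdeg 0)
    have ha : b ≠ 0 := fun h => hne 0 (by rw [hv0, h, map_zero])
    refine ⟨fun _ => q.coeff 0 / b, ?_⟩
    rw [Finset.sum_range_one, hv0, ← C_mul, div_mul_cancel₀ _ ha,
      ← Polynomial.eq_C_of_natDegree_le_zero hq]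
  | succ m ih =>
    intro q hq
    have hlead : (w (m+1)).leadingCoeff ≠ 0 := leadingCoeff_ne_zero.mpr (hne (m+1))
    set a := q.coeff (m+1) / (w (m+1)).leadingCoeff with ha
    set q' := q - C a * w (m+1) with hq'
    have hdq' : q'.natDegree ≤ m := by
      refine Polynomial.natDegree_le_iff_coeff_eq_zero.mpr fun k hk => ?_
      rw [hq', Polynomial.coeff_sub, Polynomial.coeff_C_mul]
      rcases eq_or_lt_of_le (Nat.succ_le_of_lt hk) with h | h
      · rw [← h]
        have hcoe : (w (m+1)).coeff (m+1) = (w (m+1)).leadingCoeff := by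
          rw [Polynomial.leadingCoeff, hdeg]
        rw [hcoe, ha, div_mul_cancel₀ _ hlead, sub_self]
      · rw [Polynomial.coeff_eq_zero_of_natDegree_lt (lt_of_le_of_lt hq h),
          Polynomial.coeff_eq_zero_of_natDegree_lt (by rw [hdeg]; exact h),
          mul_zero, sub_zero]
    obtain ⟨c, hc⟩ := ih q' hdq'
    refine ⟨Function.update c (m+1) a, ?_⟩
    rw [Finset.sum_range_succ, Function.update_self]
    rw [Finset.sum_congr rfl (fun k hk => by
      rw [Function.update_of_ne (Nat.ne_of_lt (Finset.mem_range.mp hk))])]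
    rw [← hc, hq']; ring


lemma AssocScheme.exists_entry {V : Type*} [Fintype V] [DecidableEq V] {d : ℕ}
    (S : AssocScheme V d) (k : Fin (d+1)) :
    ∃ x y : V, S.A k x y = 1 ∧ ∀ l, l ≠ k → S.A l x y = 0 := by
  obtain ⟨x, y, hxy⟩ : ∃ x y, S.A k x y ≠ 0 := by
    by_contra hc
    push_neg at hc
    exact S.A_ne k (by ext x y; simpa using hc x y)
  have h1 : S.A k x y = 1 := (S.A_entries k x y).resolve_left hxy
  have hsum : ∑ l, S.A l x y = 1 := by
    have := congrFun (congrFun S.A_sum x) y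
    simpa [Matrix.sum_apply] using this
  refine ⟨x, y, h1, fun l hl => ?_⟩
  have h0 : ∑ l ∈ Finset.univ.erase k, S.A l x y = 0 := by
    have h2 := Finset.add_sum_erase Finset.univ (fun l => S.A l x y) (Finset.mem_univ k)
    rw [h1] at h2
    linarith
  have hnn : ∀ l ∈ Finset.univ.erase k, 0 ≤ S.A l x y := fun l _ => by
    rcases S.A_entries l x y with h | h <;> rw [h] <;> norm_num
  exact (Finset.sum_eq_zero_iff_of_nonneg hnn).mp h0 l (Finset.mem_erase.mpr ⟨hl, Finset.mem_univ l⟩)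


/-- If `S` is P-polynomial with respect to the ordering `A 0, A 1, …, A d` (witnessed by
polynomials `v i` of degree `i` with `v i (A 1) = A i`) and the eigenvalues of `A 1` are
pairwise distinct, then for each `i ∈ {1,…,d}`,
`∏_{j=1, j≠i}^d (θ₀ − θ_j)/(θ_i − θ_j) = − Q_i(d)`. -/
theorem stmt4 {V : Type*} [Fintype V] [DecidableEq V] {d : ℕ} (S : AssocScheme V d)
    (hd : 1 ≤ d) (hθ : Function.Injective S.theta)
    (v : Fin (d + 1) → Polynomial ℝ)
    (hv : ∀ i, (v i).natDegree = (i : ℕ) ∧ Polynomial.aeval (S.A 1) (v i) = S.A i) :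
    ∀ i : Fin (d + 1), i ≠ 0 →
      (∏ j ∈ (Finset.univ.erase 0).erase i,
          (S.theta 0 - S.theta j) / (S.theta i - S.theta j)) = - S.Q i (Fin.last d) := by
  intro i hi
  classical
  set θ := S.theta with hθdef
  set F : Finset (Fin (d+1)) := (Finset.univ.erase 0).erase i with hF
  set κ := ∏ j ∈ F, (θ 0 - θ j) / (θ i - θ j) with hκ
  set p : Polynomial ℝ :=
    ∏ j ∈ F, (Polynomial.C ((θ i - θ j)⁻¹) * (Polynomial.X - Polynomial.C (θ j))) with hp
  have hsub : ∀ j ∈ F, θ i - θ j ≠ 0 := fun j hj =>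
    sub_ne_zero.mpr fun h => (Finset.mem_erase.mp hj).1 (hθ h).symm
  -- eval values
  have hevali : p.eval (θ i) = 1 := by
    rw [hp, Polynomial.eval_prod]
    refine Finset.prod_eq_one fun j hj => ?_
    simp [inv_mul_cancel₀ (hsub j hj)]
  have heval0 : p.eval (θ 0) = κ := by
    rw [hp, hκ, Polynomial.eval_prod]
    refine Finset.prod_congr rfl fun j hj => ?_
    simp [div_eq_inv_mul]
  have hevalF : ∀ k ∈ F, p.eval (θ k) = 0 := fun k hk => by
    rw [hp, Polynomial.eval_prod]
    exact Finset.prod_eq_zero hk (by simp)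
  -- degree bound
  have hcard : F.card = d - 1 := by
    rw [hF, Finset.card_erase_of_mem (Finset.mem_erase.mpr ⟨hi, Finset.mem_univ i⟩),
      Finset.card_erase_of_mem (Finset.mem_univ 0), Finset.card_univ, Fintype.card_fin]
    omega
  have hdeg : p.natDegree ≤ d - 1 := by
    calc p.natDegree
        ≤ ∑ j ∈ F, (Polynomial.C ((θ i - θ j)⁻¹)
            * (Polynomial.X - Polynomial.C (θ j))).natDegree :=
          Polynomial.natDegree_prod_le _ _
      _ ≤ ∑ _j ∈ F, 1 := by
          refine Finset.sum_le_sum fun j _ => ?_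
          calc (Polynomial.C ((θ i - θ j)⁻¹) * (Polynomial.X - Polynomial.C (θ j))).natDegree
              ≤ (Polynomial.C ((θ i - θ j)⁻¹)).natDegree
                + (Polynomial.X - Polynomial.C (θ j)).natDegree :=
                Polynomial.natDegree_mul_le
            _ ≤ 1 := by simp [Polynomial.natDegree_X_sub_C]
      _ = d - 1 := by rw [Finset.sum_const, hcard, smul_eq_mul, mul_one]
  -- the extended family and the span representation
  set w : ℕ → Polynomial ℝ :=
    fun k => if h : k < d + 1 then v ⟨k, h⟩ else Polynomial.X ^ k with hw
  have hwdeg : ∀ k, (w k).natDegree = k := fun k => by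
    rw [hw]; dsimp only; split
    · exact (hv ⟨k, by assumption⟩).1
    · exact Polynomial.natDegree_X_pow k
  have hwne : ∀ k, w k ≠ 0 := fun k => by
    rw [hw]; dsimp only; split
    · intro h
      exact S.A_ne ⟨k, by assumption⟩ (by rw [← (hv ⟨k, by assumption⟩).2, h, map_zero])
    · exact pow_ne_zero _ Polynomial.X_ne_zero
  obtain ⟨c, hc⟩ := span_poly w hwdeg hwne (d-1) p hdeg
  rw [Nat.sub_add_cancel hd] at hc
  -- spectral expansion
  have hA1 : S.A 1 = ∑ j, θ j • S.E j := S.A_eq 1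
  have hspec : Polynomial.aeval (S.A 1) p = ∑ k, (p.eval (θ k)) • S.E k := by
    rw [hA1]; exact spec_aeval S.E S.E_sum S.E_mul θ p
  have hcollapse : Polynomial.aeval (S.A 1) p = κ • S.E 0 + S.E i := by
    have hz : ∀ k ∈ Finset.univ, k ∉ ({0, i} : Finset (Fin (d+1))) →
        p.eval (θ k) • S.E k = 0 := by
      intro k _ hk
      simp only [Finset.mem_insert, Finset.mem_singleton, not_or] at hk
      rw [hevalF k (Finset.mem_erase.mpr ⟨hk.2, Finset.mem_erase.mpr ⟨hk.1, Finset.mem_univ k⟩⟩),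
        zero_smul]
    rw [hspec, ← Finset.sum_subset (Finset.subset_univ ({0, i} : Finset (Fin (d+1)))) hz,
      Finset.sum_pair (Ne.symm hi), heval0, hevali, one_smul]
  -- the special entry of A_d
  obtain ⟨x, y, hxy1, hxy0⟩ := S.exists_entry (Fin.last d)
  -- first evaluation: zero
  have h1 : (Polynomial.aeval (S.A 1) p) x y = 0 := by
    rw [hc, map_sum, Matrix.sum_apply]
    refine Finset.sum_eq_zero fun k hk => ?_
    have hk' : k < d := Finset.mem_range.mp hk
    have hk2 : k < d + 1 := hk'.trans (Nat.lt_succ_self d)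
    have hterm : Polynomial.aeval (S.A 1) (Polynomial.C (c k) * w k)
        = c k • S.A ⟨k, hk2⟩ := by
      rw [_root_.map_mul, Polynomial.aeval_C, hw]
      dsimp only
      rw [dif_pos hk2, (hv ⟨k, hk2⟩).2, ← Algebra.smul_def]
    rw [hterm, Matrix.smul_apply, hxy0 ⟨k, hk2⟩ (by
        intro h
        have := congrArg Fin.val h
        simp only [Fin.val_last] at this
        omega), smul_zero]
  -- second evaluation
  have hn0 : (Fintype.card V : ℝ) ≠ 0 := by
    have : Nonempty V := ⟨x⟩
    exact Nat.cast_ne_zero.mpr Fintype.card_ne_zero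
  have hE0 : S.E 0 = ((Fintype.card V : ℝ))⁻¹ • ∑ j, S.A j := by
    rw [S.E_zero, ← S.A_sum]
  have hsumA : ∑ j, S.A j x y = 1 := by
    rw [Finset.sum_eq_single (Fin.last d) (fun l _ hl => hxy0 l hl) (by simp), hxy1]
  have hsumQ : ∑ j, S.Q i j * S.A j x y = S.Q i (Fin.last d) := by
    rw [Finset.sum_eq_single (Fin.last d)
      (fun l _ hl => by rw [hxy0 l hl, mul_zero]) (by simp), hxy1, mul_one]
  have h2 : (Polynomial.aeval (S.A 1) p) x y
      = ((Fintype.card V : ℝ))⁻¹ * (κ + S.Q i (Fin.last d)) := by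
    rw [hcollapse, hE0, S.E_eq i]
    simp only [Matrix.add_apply, Matrix.smul_apply, Matrix.sum_apply, smul_eq_mul]
    rw [hsumA, hsumQ]
    ring
  rw [h1] at h2
  have h3 : κ + S.Q i (Fin.last d) = 0 := by
    rcases mul_eq_zero.mp h2.symm with h | h
    · exact absurd h (inv_ne_zero hn0)
    · exact h
  linarith
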